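/- Let G₁ be r₁-regular on n₁ vertices and m₁ edges, and G₂ be r₂-regular on n₂ vertices, with signless Laplacian eigenvalues νᵢ. Then φ(Q(G₁∨̇G₂); x) = (x−2)^{m₁−n₁}·(x³ − a x² + b x − 4r₂n₂)·∏_{i=1}^{n₂−1}(x−n₁−νᵢ(G₂))·∏_{i=1}^{n₁−1}(x² − (2+r₁+n₂)x + 2(r₁+n₂) − νᵢ(G₁)), where a = 2+2r₂+r₁+n₁+n₂ and b = 2n₁+2n₂+n₁r₁+2r₁r₂+2r₂n₂+4r₂. -/

import Mathlib

open Matrix BigOperators Finset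

attribute [local instance] Classical.propDecidable

/-- The coronal of a matrix `M`: `1ᵀ (xI − M)⁻¹ 1`. -/
noncomputable def coronal {n : Type*} [Fintype n] [DecidableEq n]
    (M : Matrix n n ℝ) (x : ℝ) : ℝ :=
  (fun _ => (1 : ℝ)) ⬝ᵥ ((x • (1 : Matrix n n ℝ) - M)⁻¹ *ᵥ fun _ => (1 : ℝ))

/-- The adjacency matrix over ℝ (classical decidability). -/
noncomputable def adjM {V : Type*} (G : SimpleGraph V) : Matrix V V ℝ :=
  letI := Classical.decRel G.Adj
  G.adjMatrix ℝ

/-- The Laplacian matrix over ℝ. -/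
noncomputable def lapM {V : Type*} [Fintype V] (G : SimpleGraph V) : Matrix V V ℝ :=
  letI := Classical.decRel G.Adj
  letI : DecidableEq V := Classical.decEq V
  G.lapMatrix ℝ

/-- The signless Laplacian matrix over ℝ. -/
noncomputable def signlessLapM {V : Type*} [Fintype V] (G : SimpleGraph V) : Matrix V V ℝ :=
  letI := Classical.decRel G.Adj
  letI : DecidableEq V := Classical.decEq V
  G.degMatrix ℝ + G.adjMatrix ℝ

noncomputable instance edgeSetFintype {V : Type*} [Finite V] (G : SimpleGraph V) :
    Fintype G.edgeSet := Fintype.ofFinite _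

/-- Subdivision-vertex join. -/
def svJoin {V₁ V₂ : Type*} (G₁ : SimpleGraph V₁) (G₂ : SimpleGraph V₂) :
    SimpleGraph (V₁ ⊕ (G₁.edgeSet ⊕ V₂)) where
  Adj a b :=
    match a, b with
    | Sum.inl v, Sum.inr (Sum.inl e) => v ∈ (e : Sym2 V₁)
    | Sum.inr (Sum.inl e), Sum.inl v => v ∈ (e : Sym2 V₁)
    | Sum.inl _, Sum.inr (Sum.inr _) => True
    | Sum.inr (Sum.inr _), Sum.inl _ => True
    | Sum.inr (Sum.inr w), Sum.inr (Sum.inr w') => G₂.Adj w w'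
    | _, _ => False
  symm := by
    constructor
    rintro (v | e | w) (v' | e' | w') h <;> simp_all <;> exact h.symm
  loopless := by
    constructor
    rintro (v | e | w) h <;> simp_all

/-- Subdivision-edge join. -/
def seJoin {V₁ V₂ : Type*} (G₁ : SimpleGraph V₁) (G₂ : SimpleGraph V₂) :
    SimpleGraph (V₁ ⊕ (G₁.edgeSet ⊕ V₂)) where
  Adj a b :=
    match a, b with
    | Sum.inl v, Sum.inr (Sum.inl e) => v ∈ (e : Sym2 V₁)
    | Sum.inr (Sum.inl e), Sum.inl v => v ∈ (e : Sym2 V₁)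
    | Sum.inr (Sum.inl _), Sum.inr (Sum.inr _) => True
    | Sum.inr (Sum.inr _), Sum.inr (Sum.inl _) => True
    | Sum.inr (Sum.inr w), Sum.inr (Sum.inr w') => G₂.Adj w w'
    | _, _ => False
  symm := by
    constructor
    rintro (v | e | w) (v' | e' | w') h <;> simp_all <;> exact h.symm
  loopless := by
    constructor
    rintro (v | e | w) h <;> simp_all

/-- Number of spanning trees of a graph. -/
noncomputable def spanningTreeCount {V : Type*} (G : SimpleGraph V) : ℕ :=
  Nat.card {H : G.Subgraph // H.IsSpanning ∧ H.coe.IsTree}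

section degrees
variable {n₁ n₂ : ℕ} (G₁ : SimpleGraph (Fin n₁)) (G₂ : SimpleGraph (Fin n₂))

lemma svJoin_degree_inl {r₁ : ℕ} (hreg₁ : G₁.IsRegularOfDegree r₁) (v : Fin n₁) :
    (svJoin G₁ G₂).degree (Sum.inl v) = r₁ + n₂ := by
  classical
  rw [← SimpleGraph.card_neighborSet_eq_degree]
  have e : ((svJoin G₁ G₂).neighborSet (Sum.inl v)) ≃ (G₁.incidenceSet v ⊕ Fin n₂) :=
    { toFun := fun x => match x with
        | ⟨Sum.inl _, h⟩ => nomatch h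
        | ⟨Sum.inr (Sum.inl e), h⟩ => Sum.inl ⟨e.1, e.2, h⟩
        | ⟨Sum.inr (Sum.inr w), _⟩ => Sum.inr w
      invFun := fun y => match y with
        | Sum.inl ⟨s, hs⟩ => ⟨Sum.inr (Sum.inl ⟨s, hs.1⟩), hs.2⟩
        | Sum.inr w => ⟨Sum.inr (Sum.inr w), trivial⟩
      left_inv := by rintro ⟨(v' | e | w), h⟩ <;> first | exact (h : False).elim | rfl
      right_inv := by rintro (⟨s, hs⟩ | w) <;> rfl }
  rw [Fintype.card_congr e, Fintype.card_sum, G₁.card_incidenceSet_eq_degree, hreg₁ v,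
    Fintype.card_fin]

lemma svJoin_degree_inm (e : G₁.edgeSet) :
    (svJoin G₁ G₂).degree (Sum.inr (Sum.inl e)) = 2 := by
  classical
  rw [← SimpleGraph.card_neighborSet_eq_degree]
  have eqv : ((svJoin G₁ G₂).neighborSet (Sum.inr (Sum.inl e))) ≃
      {v : Fin n₁ // v ∈ (e : Sym2 (Fin n₁))} :=
    { toFun := fun x => match x with
        | ⟨Sum.inl v, h⟩ => ⟨v, h⟩
        | ⟨Sum.inr (Sum.inl _), h⟩ => nomatch h
        | ⟨Sum.inr (Sum.inr _), h⟩ => nomatch h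
      invFun := fun y => ⟨Sum.inl y.1, y.2⟩
      left_inv := by rintro ⟨(v | e' | w), h⟩ <;> first | exact (h : False).elim | rfl
      right_inv := by rintro ⟨v, hv⟩; rfl }
  rw [Fintype.card_congr eqv]
  obtain ⟨e, he⟩ := e
  induction e with
  | _ a b =>
    have hab : a ≠ b := by
      intro h
      exact G₁.not_isDiag_of_mem_edgeSet he (by simp [h])
    have hset : {v : Fin n₁ | v ∈ s(a, b)} = {a, b} := by
      ext v; simp [Sym2.mem_iff]
    calc Fintype.card {v : Fin n₁ // v ∈ (⟨s(a, b), he⟩ : G₁.edgeSet).1}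
        = Fintype.card ({a, b} : Set (Fin n₁)) := Fintype.card_congr (Equiv.setCongr hset)
      _ = ({a, b} : Finset (Fin n₁)).card := by
          rw [← Set.toFinset_card, Set.toFinset_insert, Set.toFinset_singleton]
      _ = 2 := Finset.card_pair hab

lemma svJoin_degree_inr {r₂ : ℕ} (hreg₂ : G₂.IsRegularOfDegree r₂) (w : Fin n₂) :
    (svJoin G₁ G₂).degree (Sum.inr (Sum.inr w)) = n₁ + r₂ := by
  classical
  rw [← SimpleGraph.card_neighborSet_eq_degree]
  have e : ((svJoin G₁ G₂).neighborSet (Sum.inr (Sum.inr w))) ≃ (Fin n₁ ⊕ G₂.neighborSet w) :=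
    { toFun := fun x => match x with
        | ⟨Sum.inl v, _⟩ => Sum.inl v
        | ⟨Sum.inr (Sum.inl _), h⟩ => nomatch h
        | ⟨Sum.inr (Sum.inr w'), h⟩ => Sum.inr ⟨w', h⟩
      invFun := fun y => match y with
        | Sum.inl v => ⟨Sum.inl v, trivial⟩
        | Sum.inr ⟨w', h⟩ => ⟨Sum.inr (Sum.inr w'), h⟩
      left_inv := by rintro ⟨(v | e' | w'), h⟩ <;> first | exact (h : False).elim | rfl
      right_inv := by rintro (v | ⟨w', h⟩) <;> rfl }
  rw [Fintype.card_congr e, Fintype.card_sum, Fintype.card_fin,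
    SimpleGraph.card_neighborSet_eq_degree, hreg₂ w]

end degrees

noncomputable def Rmat {n₁ : ℕ} (G₁ : SimpleGraph (Fin n₁)) : Matrix (Fin n₁) G₁.edgeSet ℝ :=
  Matrix.of fun v e => if v ∈ (e : Sym2 (Fin n₁)) then 1 else 0

noncomputable def Jmat {n₁ n₂ : ℕ} : Matrix (Fin n₁) (Fin n₂) ℝ := Matrix.of fun _ _ => 1

lemma sum_inc_real {n₁ : ℕ} (G₁ : SimpleGraph (Fin n₁)) (v : Fin n₁) :
    ∑ e : G₁.edgeSet, (if v ∈ (e : Sym2 (Fin n₁)) then (1:ℝ) else 0) = G₁.degree v := by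
  classical
  rw [Finset.sum_boole]
  congr 1
  rw [← G₁.card_incidenceSet_eq_degree v, ← Fintype.card_subtype]
  exact Fintype.card_congr
    ⟨fun x => ⟨x.1.1, x.1.2, x.2⟩, fun y => ⟨⟨y.1, y.2.1⟩, y.2.2⟩, fun x => rfl, fun y => rfl⟩

lemma RRt {n₁ : ℕ} (G₁ : SimpleGraph (Fin n₁)) {r₁ : ℕ} (hreg₁ : G₁.IsRegularOfDegree r₁) :
    Rmat G₁ * (Rmat G₁)ᵀ = signlessLapM G₁ := by
  classical
  ext v w
  simp only [Matrix.mul_apply, Rmat, Matrix.transpose_apply, Matrix.of_apply,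
    signlessLapM, Matrix.add_apply, SimpleGraph.degMatrix, Matrix.diagonal_apply,
    SimpleGraph.adjMatrix_apply]
  by_cases hvw : v = w
  · subst hvw
    simp only [if_pos rfl, SimpleGraph.irrefl, if_neg (G₁.loopless.irrefl v), add_zero, ite_false]
    rw [Finset.sum_congr rfl (fun (e : G₁.edgeSet) _ => show
      (if v ∈ (e : Sym2 (Fin n₁)) then (1:ℝ) else 0) * (if v ∈ (e : Sym2 (Fin n₁)) then (1:ℝ) else 0)
        = (if v ∈ (e : Sym2 (Fin n₁)) then (1:ℝ) else 0) from by
      by_cases h : v ∈ (e : Sym2 (Fin n₁)) <;> simp [h])]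
    rw [sum_inc_real, hreg₁ v]
    simp
  · rw [if_neg hvw, zero_add]
    rw [Finset.sum_congr rfl (fun (e : G₁.edgeSet) _ => show
      (if v ∈ (e : Sym2 (Fin n₁)) then (1:ℝ) else 0) * (if w ∈ (e : Sym2 (Fin n₁)) then (1:ℝ) else 0)
        = (if (e : Sym2 (Fin n₁)) = s(v, w) then (1:ℝ) else 0) from by
      by_cases h1 : v ∈ (e : Sym2 (Fin n₁)) <;> by_cases h2 : w ∈ (e : Sym2 (Fin n₁))
      · rw [if_pos ((Sym2.mem_and_mem_iff hvw).1 ⟨h1, h2⟩)]; simp [h1, h2]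
      · rw [if_neg (fun h : (e : Sym2 (Fin n₁)) = s(v, w) => h2 (by rw [h]; simp))]
        simp [h1, h2]
      · rw [if_neg (fun h : (e : Sym2 (Fin n₁)) = s(v, w) => h1 (by rw [h]; simp))]
        simp [h1, h2]
      · rw [if_neg (fun h : (e : Sym2 (Fin n₁)) = s(v, w) => h1 (by rw [h]; simp))]
        simp [h1, h2])]
    by_cases hadj : G₁.Adj v w
    · rw [if_pos hadj]
      rw [Finset.sum_congr rfl (fun (e : G₁.edgeSet) _ => show
        (if (e : Sym2 (Fin n₁)) = s(v, w) then (1:ℝ) else 0)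
          = (if e = (⟨s(v, w), hadj⟩ : G₁.edgeSet) then (1:ℝ) else 0) from by
        simp [Subtype.ext_iff])]
      simp
    · rw [if_neg hadj]
      apply Finset.sum_eq_zero
      intro e _
      rw [if_neg]
      intro h
      exact hadj (SimpleGraph.mem_edgeSet G₁ |>.1 (h ▸ e.2))

lemma signlessLapM_mulVec_one {V : Type*} [Fintype V] (G : SimpleGraph V) {r : ℕ}
    (hreg : G.IsRegularOfDegree r) :
    signlessLapM G *ᵥ (fun _ => (1:ℝ)) = fun _ => (2 * r : ℝ) := by
  classical
  ext v
  simp only [signlessLapM, Matrix.add_mulVec, Pi.add_apply]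
  rw [SimpleGraph.degMatrix_mulVec_apply, SimpleGraph.adjMatrix_mulVec_apply]
  simp [hreg v]
  ring

lemma xsub_Q_svJoin {n₁ n₂ : ℕ} (G₁ : SimpleGraph (Fin n₁)) (G₂ : SimpleGraph (Fin n₂))
    {r₁ r₂ : ℕ} (hreg₁ : G₁.IsRegularOfDegree r₁) (hreg₂ : G₂.IsRegularOfDegree r₂) (x : ℝ) :
    x • (1 : Matrix (Fin n₁ ⊕ (G₁.edgeSet ⊕ Fin n₂)) (Fin n₁ ⊕ (G₁.edgeSet ⊕ Fin n₂)) ℝ)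
      - signlessLapM (svJoin G₁ G₂)
    = Matrix.fromBlocks ((x - r₁ - n₂) • (1 : Matrix (Fin n₁) (Fin n₁) ℝ))
        (-(Matrix.fromCols (Rmat G₁) Jmat))
        (-(Matrix.fromRows (Rmat G₁)ᵀ Jmatᵀ))
        (Matrix.fromBlocks ((x - 2) • (1 : Matrix G₁.edgeSet G₁.edgeSet ℝ)) 0 0
          ((x - n₁) • (1 : Matrix (Fin n₂) (Fin n₂) ℝ) - signlessLapM G₂)) := by
  classical
  ext a b
  simp only [Matrix.sub_apply, Matrix.smul_apply, Matrix.one_apply, signlessLapM,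
    Matrix.add_apply, SimpleGraph.degMatrix, Matrix.diagonal_apply, SimpleGraph.adjMatrix_apply]
  rcases a with v | e | w <;> rcases b with v' | e' | w'
  · by_cases h : v = v'
    · subst h
      rw [svJoin_degree_inl G₁ G₂ hreg₁ v]
      simp only [Matrix.fromBlocks_apply₁₁, Matrix.smul_apply, Matrix.one_apply_eq]
      have : ¬ (svJoin G₁ G₂).Adj (Sum.inl v) (Sum.inl v) := fun h => nomatch h
      rw [if_neg this]
      push_cast
      simp only [smul_eq_mul]
      ring
    · have hne : (Sum.inl v : Fin n₁ ⊕ (G₁.edgeSet ⊕ Fin n₂)) ≠ Sum.inl v' := by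
        simp [h]
      rw [if_neg hne, if_neg hne]
      have : ¬ (svJoin G₁ G₂).Adj (Sum.inl v) (Sum.inl v') := fun hc => nomatch hc
      rw [if_neg this]
      simp [Matrix.fromBlocks_apply₁₁, Matrix.one_apply_ne h]
  · have hne : (Sum.inl v : Fin n₁ ⊕ (G₁.edgeSet ⊕ Fin n₂)) ≠ Sum.inr (Sum.inl e') := by simp
    rw [if_neg hne, if_neg hne]
    have : (svJoin G₁ G₂).Adj (Sum.inl v) (Sum.inr (Sum.inl e')) ↔ v ∈ (e' : Sym2 (Fin n₁)) :=
      Iff.rfl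
    simp only [Matrix.fromBlocks_apply₁₂, Matrix.neg_apply, Matrix.fromCols_apply_inl,
      Rmat, Matrix.of_apply, this]
    by_cases hm : v ∈ (e' : Sym2 (Fin n₁)) <;> simp [hm]
  · have hne : (Sum.inl v : Fin n₁ ⊕ (G₁.edgeSet ⊕ Fin n₂)) ≠ Sum.inr (Sum.inr w') := by simp
    rw [if_neg hne, if_neg hne]
    have : (svJoin G₁ G₂).Adj (Sum.inl v) (Sum.inr (Sum.inr w')) := trivial
    rw [if_pos this]
    norm_num [Matrix.fromBlocks_apply₁₂, Jmat]
  · have hne : (Sum.inr (Sum.inl e) : Fin n₁ ⊕ (G₁.edgeSet ⊕ Fin n₂)) ≠ Sum.inl v' := by simp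
    rw [if_neg hne, if_neg hne]
    have : (svJoin G₁ G₂).Adj (Sum.inr (Sum.inl e)) (Sum.inl v') ↔ v' ∈ (e : Sym2 (Fin n₁)) :=
      Iff.rfl
    simp only [Matrix.fromBlocks_apply₂₁, Matrix.neg_apply, Matrix.fromRows_apply_inl,
      Matrix.transpose_apply, Rmat, Matrix.of_apply, this]
    by_cases hm : v' ∈ (e : Sym2 (Fin n₁)) <;> simp [hm]
  · by_cases h : e = e'
    · subst h
      rw [svJoin_degree_inm G₁ G₂ e]
      have : ¬ (svJoin G₁ G₂).Adj (Sum.inr (Sum.inl e)) (Sum.inr (Sum.inl e)) := fun h =>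
        nomatch h
      rw [if_neg this, if_pos rfl, if_pos (rfl : (Sum.inr (Sum.inl e) : Fin n₁ ⊕ (G₁.edgeSet ⊕ Fin n₂)) = Sum.inr (Sum.inl e))]
      simp only [Matrix.fromBlocks_apply₂₂, Matrix.fromBlocks_apply₁₁, Matrix.smul_apply,
        Matrix.one_apply_eq]
      norm_num
    · have hne : (Sum.inr (Sum.inl e) : Fin n₁ ⊕ (G₁.edgeSet ⊕ Fin n₂)) ≠ Sum.inr (Sum.inl e') :=
        by simp [h]
      rw [if_neg hne, if_neg hne]
      have : ¬ (svJoin G₁ G₂).Adj (Sum.inr (Sum.inl e)) (Sum.inr (Sum.inl e')) := fun hc =>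
        nomatch hc
      rw [if_neg this]
      simp [Matrix.fromBlocks_apply₂₂, Matrix.fromBlocks_apply₁₁, Matrix.one_apply_ne h]
  · have hne : (Sum.inr (Sum.inl e) : Fin n₁ ⊕ (G₁.edgeSet ⊕ Fin n₂)) ≠ Sum.inr (Sum.inr w') :=
      by simp
    rw [if_neg hne, if_neg hne]
    have : ¬ (svJoin G₁ G₂).Adj (Sum.inr (Sum.inl e)) (Sum.inr (Sum.inr w')) := fun hc =>
      nomatch hc
    rw [if_neg this]
    simp [Matrix.fromBlocks_apply₂₂, Matrix.fromBlocks_apply₁₂]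
  · have hne : (Sum.inr (Sum.inr w) : Fin n₁ ⊕ (G₁.edgeSet ⊕ Fin n₂)) ≠ Sum.inl v' := by simp
    rw [if_neg hne, if_neg hne]
    have : (svJoin G₁ G₂).Adj (Sum.inr (Sum.inr w)) (Sum.inl v') := trivial
    rw [if_pos this]
    norm_num [Matrix.fromBlocks_apply₂₁, Jmat]
  · have hne : (Sum.inr (Sum.inr w) : Fin n₁ ⊕ (G₁.edgeSet ⊕ Fin n₂)) ≠ Sum.inr (Sum.inl e') :=
      by simp
    rw [if_neg hne, if_neg hne]
    have : ¬ (svJoin G₁ G₂).Adj (Sum.inr (Sum.inr w)) (Sum.inr (Sum.inl e')) := fun hc =>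
      nomatch hc
    rw [if_neg this]
    simp [Matrix.fromBlocks_apply₂₂, Matrix.fromBlocks_apply₂₁]
  · have hadj : (svJoin G₁ G₂).Adj (Sum.inr (Sum.inr w)) (Sum.inr (Sum.inr w')) ↔ G₂.Adj w w' :=
      Iff.rfl
    by_cases h : w = w'
    · subst h
      rw [svJoin_degree_inr G₁ G₂ hreg₂ w]
      rw [if_pos rfl, if_pos (rfl : (Sum.inr (Sum.inr w) : Fin n₁ ⊕ (G₁.edgeSet ⊕ Fin n₂)) = Sum.inr (Sum.inr w))]
      rw [if_neg (hadj.not.2 (G₂.loopless.irrefl w))]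
      simp only [Matrix.fromBlocks_apply₂₂, Matrix.sub_apply, Matrix.smul_apply,
        Matrix.one_apply_eq, Matrix.add_apply, SimpleGraph.degMatrix, Matrix.diagonal_apply,
        SimpleGraph.adjMatrix_apply, if_pos rfl, if_neg (G₂.loopless.irrefl w)]
      rw [hreg₂ w]
      push_cast
      simp only [smul_eq_mul]
      ring
    · have hne : (Sum.inr (Sum.inr w) : Fin n₁ ⊕ (G₁.edgeSet ⊕ Fin n₂)) ≠ Sum.inr (Sum.inr w') :=
        by simp [h]
      rw [if_neg hne, if_neg hne]
      simp only [Matrix.fromBlocks_apply₂₂, Matrix.sub_apply, Matrix.smul_apply,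
        Matrix.one_apply_ne h, Matrix.add_apply, SimpleGraph.degMatrix, Matrix.diagonal_apply,
        if_neg h, SimpleGraph.adjMatrix_apply]
      rw [show (if (svJoin G₁ G₂).Adj (Sum.inr (Sum.inr w)) (Sum.inr (Sum.inr w')) then (1:ℝ) else 0)
          = (if G₂.Adj w w' then (1:ℝ) else 0) from by
        by_cases hc : G₂.Adj w w' <;> simp [hadj, hc]]
      simp only [smul_zero]

noncomputable def Jsq (n₁ : ℕ) : Matrix (Fin n₁) (Fin n₁) ℝ := Matrix.of fun _ _ => 1

lemma main_generic {n₁ n₂ : ℕ} (hn₁ : 0 < n₁) (hn₂ : 0 < n₂)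
    (G₁ : SimpleGraph (Fin n₁)) (G₂ : SimpleGraph (Fin n₂))
    {r₁ r₂ : ℕ} (hreg₁ : G₁.IsRegularOfDegree r₁) (hreg₂ : G₂.IsRegularOfDegree r₂)
    (nu₁ : Fin n₁ → ℝ) (hnu₁top : nu₁ ⟨n₁ - 1, by omega⟩ = 2 * r₁)
    (hchar₁ : ∀ x : ℝ,
      (x • (1 : Matrix (Fin n₁) (Fin n₁) ℝ) - signlessLapM G₁).det = ∏ i, (x - nu₁ i))
    (nu₂ : Fin n₂ → ℝ) (hnu₂top : nu₂ ⟨n₂ - 1, by omega⟩ = 2 * r₂)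
    (hchar₂ : ∀ x : ℝ,
      (x • (1 : Matrix (Fin n₂) (Fin n₂) ℝ) - signlessLapM G₂).det = ∏ i, (x - nu₂ i))
    (x : ℝ) (hx2 : x - 2 ≠ 0)
    (h1 : ∀ i, (x - 2) * (x - r₁ - n₂) - nu₁ i ≠ 0)
    (h2 : ∀ i, x - n₁ - nu₂ i ≠ 0) :
    (x • (1 : Matrix (Fin n₁ ⊕ (G₁.edgeSet ⊕ Fin n₂)) (Fin n₁ ⊕ (G₁.edgeSet ⊕ Fin n₂)) ℝ)
        - signlessLapM (svJoin G₁ G₂)).det * (x - 2) ^ n₁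
      = (x - 2) ^ (Fintype.card G₁.edgeSet)
        * ((x - n₁ - 2 * r₂) * ((x - 2) * (x - r₁ - n₂) - 2 * r₁) - n₁ * n₂ * (x - 2))
        * (∏ i ∈ Finset.univ.erase ⟨n₂ - 1, by omega⟩, (x - n₁ - nu₂ i))
        * (∏ i ∈ Finset.univ.erase ⟨n₁ - 1, by omega⟩,
            ((x - 2) * (x - r₁ - n₂) - nu₁ i)) := by
  classical
  set w : ℝ := x - n₁ - 2 * r₂ with hw_def
  set y : ℝ := (x - 2) * (x - r₁ - n₂) with hy_def
  have hw : w ≠ 0 := by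
    have := h2 ⟨n₂ - 1, by omega⟩
    rwa [hnu₂top] at this
  have hy2r : y - 2 * r₁ ≠ 0 := by
    have := h1 ⟨n₁ - 1, by omega⟩
    rwa [hnu₁top] at this
  -- the lower-right block
  set d₂ : Matrix (Fin n₂) (Fin n₂) ℝ := (x - n₁) • 1 - signlessLapM G₂ with hd₂_def
  have hd₂det : d₂.det = ∏ i, (x - n₁ - nu₂ i) := by
    rw [hd₂_def, hchar₂ (x - n₁)]
  have hd₂ne : d₂.det ≠ 0 := by
    rw [hd₂det]
    exact Finset.prod_ne_zero_iff.2 fun i _ => h2 i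
  letI : Invertible d₂ := d₂.invertibleOfIsUnitDet (Ne.isUnit hd₂ne)
  letI : Invertible ((x - 2) • (1 : Matrix G₁.edgeSet G₁.edgeSet ℝ)) :=
    Matrix.invertibleOfIsUnitDet _ (by
      rw [Matrix.det_smul, Matrix.det_one, mul_one]
      exact (pow_ne_zero _ hx2).isUnit)
  have hinv1 : ⅟((x - 2) • (1 : Matrix G₁.edgeSet G₁.edgeSet ℝ)) = (x - 2)⁻¹ • 1 := by
    apply invOf_eq_right_inv
    rw [Matrix.smul_mul, Matrix.mul_smul, Matrix.one_mul, smul_smul, mul_inv_cancel₀ hx2,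
      one_smul]
  letI : Invertible (Matrix.fromBlocks ((x - 2) • (1 : Matrix G₁.edgeSet G₁.edgeSet ℝ)) 0 0 d₂) :=
    Matrix.fromBlocksZero₂₁Invertible _ 0 _
  -- eigenvector facts for d₂
  have hd₂vec : d₂ *ᵥ (fun _ => (1:ℝ)) = fun _ => w := by
    rw [hd₂_def, Matrix.sub_mulVec, signlessLapM_mulVec_one G₂ hreg₂,
      Matrix.smul_mulVec, Matrix.one_mulVec]
    ext v
    simp [hw_def]
  have hd₂inv_vec : d₂⁻¹ *ᵥ (fun _ => (1:ℝ)) = fun _ => w⁻¹ := by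
    have h₂' : d₂ *ᵥ (fun _ => w⁻¹) = fun _ => (1:ℝ) := by
      have : (fun _ => w⁻¹ : Fin n₂ → ℝ) = w⁻¹ • (fun _ => (1:ℝ)) := by
        ext v; simp
      rw [this, Matrix.mulVec_smul, hd₂vec]
      ext v; simp [inv_mul_cancel₀ hw]
    calc d₂⁻¹ *ᵥ (fun _ => (1:ℝ)) = d₂⁻¹ *ᵥ (d₂ *ᵥ fun _ => w⁻¹) := by rw [h₂']
      _ = (d₂⁻¹ * d₂) *ᵥ (fun _ => w⁻¹) := Matrix.mulVec_mulVec _ _ _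
      _ = fun _ => w⁻¹ := by rw [Matrix.nonsing_inv_mul _ (Ne.isUnit hd₂ne), Matrix.one_mulVec]
  have hJdJ : (Jmat : Matrix (Fin n₁) (Fin n₂) ℝ) * d₂⁻¹ * (Jmat : Matrix (Fin n₁) (Fin n₂) ℝ)ᵀ
      = (n₂ * w⁻¹) • Jsq n₁ := by
    ext v v'
    simp only [Matrix.mul_apply, Jmat, Jsq, Matrix.of_apply, Matrix.transpose_apply, one_mul,
      mul_one, Matrix.smul_apply, smul_eq_mul]
    rw [Finset.sum_comm]
    have : ∀ p : Fin n₂, ∑ q : Fin n₂, d₂⁻¹ p q = w⁻¹ := by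
      intro p
      have := congrFun hd₂inv_vec p
      simpa [Matrix.mulVec, dotProduct] using this
    rw [Finset.sum_congr rfl fun p _ => this p, Finset.sum_const, Finset.card_univ,
      Fintype.card_fin, nsmul_eq_mul]
  -- the upper-left Schur complement pieces
  set T : Matrix (Fin n₁) (Fin n₁) ℝ :=
    (x - r₁ - n₂) • 1 - (x - 2)⁻¹ • signlessLapM G₁ with hT_def
  set t : ℝ := (x - r₁ - n₂) - (x - 2)⁻¹ * (2 * r₁) with ht_def
  have ht_eq : t = (x - 2)⁻¹ * (y - 2 * r₁) := by
    rw [ht_def, hy_def]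
    field_simp
  have ht : t ≠ 0 := by
    rw [ht_eq]
    exact mul_ne_zero (inv_ne_zero hx2) hy2r
  have hT1 : T *ᵥ (fun _ => (1:ℝ)) = fun _ => t := by
    rw [hT_def, Matrix.sub_mulVec, Matrix.smul_mulVec, Matrix.smul_mulVec,
      Matrix.one_mulVec, signlessLapM_mulVec_one G₁ hreg₁]
    ext v
    simp [ht_def]
  have hTJ : T * Jsq n₁ = t • Jsq n₁ := by
    ext v v'
    have := congrFun hT1 v
    simp only [Matrix.mulVec, dotProduct, mul_one] at this
    simp only [Matrix.mul_apply, Jsq, Matrix.of_apply, mul_one, Matrix.smul_apply, smul_eq_mul]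
    rw [Finset.sum_congr rfl fun u _ => rfl]
    simpa using this
  have hsmulT : (x - 2) • T = y • 1 - signlessLapM G₁ := by
    rw [hT_def, smul_sub, smul_smul, smul_smul, mul_inv_cancel₀ hx2, one_smul, hy_def]
  have hTdet : (x - 2) ^ n₁ * T.det = ∏ i, (y - nu₁ i) := by
    calc (x - 2) ^ n₁ * T.det = ((x - 2) • T).det := by
          rw [Matrix.det_smul, Fintype.card_fin]
      _ = ∏ i, (y - nu₁ i) := by rw [hsmulT, hchar₁ y]
  set c : ℝ := n₂ * w⁻¹ with hc_def
  set k : ℝ := c / t with hk_def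
  have hfac : T - c • Jsq n₁ = T * (1 - k • Jsq n₁) := by
    rw [Matrix.mul_sub, Matrix.mul_one, Matrix.mul_smul, hTJ, smul_smul, hk_def,
      div_mul_cancel₀ _ ht]
  have hdet1J : (1 - k • Jsq n₁ : Matrix (Fin n₁) (Fin n₁) ℝ).det = 1 - n₁ * k := by
    have heq : (1 - k • Jsq n₁ : Matrix (Fin n₁) (Fin n₁) ℝ)
        = 1 + Matrix.replicateCol (Fin 1) (fun _ => -k) * Matrix.replicateRow (Fin 1) (fun _ => (1:ℝ)) := by
      ext v v'
      simp [Jsq, Matrix.mul_apply, Matrix.replicateCol, Matrix.replicateRow, sub_eq_add_neg]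
    rw [heq]; erw [Matrix.det_one_add_replicateCol_mul_replicateRow]
    simp [dotProduct]
    ring
  -- assemble
  rw [xsub_Q_svJoin G₁ G₂ hreg₁ hreg₂ x, Matrix.det_fromBlocks₂₂,
    Matrix.invOf_fromBlocks_zero₂₁_eq, hinv1, invOf_eq_nonsing_inv,
    ]
  simp only [Matrix.neg_mul, Matrix.mul_neg, neg_neg]
  rw [Matrix.fromCols_mul_fromBlocks]
  simp only [Matrix.mul_zero, Matrix.zero_mul, add_zero, zero_add, Matrix.mul_neg, neg_zero]
  rw [Matrix.fromCols_mul_fromRows]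
  rw [Matrix.mul_smul, Matrix.mul_one, Matrix.smul_mul, RRt G₁ hreg₁, hJdJ]
  rw [Matrix.det_fromBlocks_zero₂₁, Matrix.det_smul, Matrix.det_one, mul_one, hd₂det]
  rw [show (x - r₁ - n₂) • (1 : Matrix (Fin n₁) (Fin n₁) ℝ)
        - ((x - 2)⁻¹ • signlessLapM G₁ + (n₂ * w⁻¹) • Jsq n₁) = T - c • Jsq n₁ from by
    rw [sub_add_eq_sub_sub, hT_def, hc_def]]
  rw [hfac, Matrix.det_mul, hdet1J]
  -- split products
  have hsplit₂ : ∏ i, (x - n₁ - nu₂ i)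
      = w * ∏ i ∈ Finset.univ.erase ⟨n₂ - 1, by omega⟩, (x - n₁ - nu₂ i) := by
    rw [← Finset.mul_prod_erase Finset.univ _ (Finset.mem_univ ⟨n₂ - 1, by omega⟩),
      hnu₂top, hw_def, sub_sub]
  have hsplit₁ : ∏ i, (y - nu₁ i)
      = (y - 2 * r₁) * ∏ i ∈ Finset.univ.erase ⟨n₁ - 1, by omega⟩, (y - nu₁ i) := by
    rw [← Finset.mul_prod_erase Finset.univ _ (Finset.mem_univ ⟨n₁ - 1, by omega⟩), hnu₁top]
  set P2 : ℝ := ∏ i ∈ Finset.univ.erase ⟨n₂ - 1, by omega⟩, (x - n₁ - nu₂ i) with hP2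
  set P1 : ℝ := ∏ i ∈ Finset.univ.erase ⟨n₁ - 1, by omega⟩, (y - nu₁ i) with hP1
  have key : T.det * (x - 2) ^ n₁ = (y - 2 * r₁) * P1 := by
    rw [mul_comm, hTdet, hsplit₁]
  calc (x - 2) ^ Fintype.card G₁.edgeSet * (∏ i, (x - n₁ - nu₂ i)) * (T.det * (1 - n₁ * k))
        * (x - 2) ^ n₁
      = (x - 2) ^ Fintype.card G₁.edgeSet * (w * P2) * (1 - n₁ * k)
        * (T.det * (x - 2) ^ n₁) := by rw [hsplit₂]; ring
    _ = (x - 2) ^ Fintype.card G₁.edgeSet * (w * P2) * (1 - n₁ * k)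
        * ((y - 2 * r₁) * P1) := by rw [key]
    _ = (x - 2) ^ Fintype.card G₁.edgeSet * (w * (y - 2 * r₁) - n₁ * n₂ * (x - 2)) * P2 * P1 := by
        have hsc : w * (y - 2 * r₁) * (1 - n₁ * k) = w * (y - 2 * r₁) - n₁ * n₂ * (x - 2) := by
          rw [hk_def, hc_def, ht_eq]
          field_simp
        calc (x - 2) ^ Fintype.card G₁.edgeSet * (w * P2) * (1 - n₁ * k)
              * ((y - 2 * r₁) * P1)
            = (x - 2) ^ Fintype.card G₁.edgeSet * (w * (y - 2 * r₁) * (1 - n₁ * k)) * P2 * P1 :=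
              by ring
          _ = _ := by rw [hsc]

lemma eval_charpoly' {n : Type*} [Fintype n] [DecidableEq n] (M : Matrix n n ℝ) (x : ℝ) :
    (M.charpoly).eval x = (x • (1 : Matrix n n ℝ) - M).det := by
  rw [Matrix.charpoly, ← Polynomial.coe_evalRingHom, RingHom.map_det]
  congr 1
  ext i j
  by_cases h : i = j <;>
    simp [Matrix.charmatrix_apply, h, Matrix.one_apply, Matrix.smul_apply, Matrix.map_apply,
      Matrix.diagonal_apply]

/-- The signless Laplacian characteristic polynomial of `G₁ ∨̇ G₂` for regular graphs
`G₁` (degree `r₁`) and `G₂` (degree `r₂`), where `a = 2+2r₂+r₁+n₁+n₂` and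
`b = 2n₁+2n₂+n₁r₁+2r₁r₂+2r₂n₂+4r₂`. -/
theorem signlessLap_charpoly_svJoin_regular (n₁ m₁ n₂ r₁ r₂ : ℕ)
    (hn₁ : 0 < n₁) (hn₂ : 0 < n₂)
    (G₁ : SimpleGraph (Fin n₁)) (hreg₁ : G₁.IsRegularOfDegree r₁)
    (hm₁ : G₁.edgeFinset.card = m₁)
    (G₂ : SimpleGraph (Fin n₂)) (hreg₂ : G₂.IsRegularOfDegree r₂)
    (nu₁ : Fin n₁ → ℝ) (hnu₁ : Monotone nu₁)
    (hnu₁top : nu₁ ⟨n₁ - 1, by omega⟩ = 2 * r₁)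
    (hchar₁ : ∀ x : ℝ,
      (x • (1 : Matrix (Fin n₁) (Fin n₁) ℝ) - signlessLapM G₁).det = ∏ i, (x - nu₁ i))
    (nu₂ : Fin n₂ → ℝ) (hnu₂ : Monotone nu₂)
    (hnu₂top : nu₂ ⟨n₂ - 1, by omega⟩ = 2 * r₂)
    (hchar₂ : ∀ x : ℝ,
      (x • (1 : Matrix (Fin n₂) (Fin n₂) ℝ) - signlessLapM G₂).det = ∏ i, (x - nu₂ i))
    (x : ℝ) (hx2 : x ≠ 2) :
    (x • (1 : Matrix (Fin n₁ ⊕ (G₁.edgeSet ⊕ Fin n₂)) (Fin n₁ ⊕ (G₁.edgeSet ⊕ Fin n₂)) ℝ)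
        - signlessLapM (svJoin G₁ G₂)).det
      = (x - 2) ^ ((m₁ : ℤ) - (n₁ : ℤ))
        * (x ^ 3 - ((2 : ℝ) + 2 * r₂ + r₁ + n₁ + n₂) * x ^ 2
            + ((2 : ℝ) * n₁ + 2 * n₂ + n₁ * r₁ + 2 * r₁ * r₂ + 2 * r₂ * n₂ + 4 * r₂) * x
            - 4 * r₂ * n₂)
        * (∏ i ∈ Finset.univ.erase ⟨n₂ - 1, by omega⟩, (x - n₁ - nu₂ i))
        * (∏ i ∈ Finset.univ.erase ⟨n₁ - 1, by omega⟩,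
            (x ^ 2 - (2 + r₁ + n₂) * x + 2 * (r₁ + n₂) - nu₁ i)) := by
  classical
  have hm₁' : Fintype.card G₁.edgeSet = m₁ := by
    rw [← hm₁, SimpleGraph.edgeFinset, Set.toFinset_card]
  -- bounds on eigenvalues
  have hnu₁le : ∀ i : Fin n₁, nu₁ i ≤ 2 * r₁ := by
    intro i
    rw [← hnu₁top]
    exact hnu₁ (by rw [Fin.le_def]; exact Nat.le_sub_one_of_lt i.2)
  have hnu₂le : ∀ i : Fin n₂, nu₂ i ≤ 2 * r₂ := by
    intro i
    rw [← hnu₂top]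
    exact hnu₂ (by rw [Fin.le_def]; exact Nat.le_sub_one_of_lt i.2)
  -- the two polynomials
  set p : Polynomial ℝ := (signlessLapM (svJoin G₁ G₂)).charpoly
      * (Polynomial.X - Polynomial.C 2) ^ n₁ with hp_def
  set q : Polynomial ℝ := (Polynomial.X - Polynomial.C 2) ^ m₁
      * (Polynomial.X ^ 3 - Polynomial.C ((2 : ℝ) + 2 * r₂ + r₁ + n₁ + n₂) * Polynomial.X ^ 2
          + Polynomial.C ((2 : ℝ) * n₁ + 2 * n₂ + n₁ * r₁ + 2 * r₁ * r₂ + 2 * r₂ * n₂ + 4 * r₂)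
            * Polynomial.X
          - Polynomial.C ((4 : ℝ) * r₂ * n₂))
      * (∏ i ∈ Finset.univ.erase ⟨n₂ - 1, by omega⟩,
          (Polynomial.X - Polynomial.C ((n₁ : ℝ) + nu₂ i)))
      * (∏ i ∈ Finset.univ.erase ⟨n₁ - 1, by omega⟩,
          (Polynomial.X ^ 2 - Polynomial.C ((2 : ℝ) + r₁ + n₂) * Polynomial.X
            + Polynomial.C (2 * ((r₁ : ℝ) + n₂) - nu₁ i))) with hq_def
  have hinf : ({z : ℝ | Polynomial.eval z p = Polynomial.eval z q}).Infinite := by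
    apply Set.Infinite.mono _ (Set.Ioi_infinite ((3 : ℝ) + n₁ + n₂ + 3 * r₁ + 2 * r₂))
    intro z hz
    simp only [Set.mem_Ioi] at hz
    have hn₁R : (0:ℝ) ≤ n₁ := Nat.cast_nonneg n₁
    have hn₂R : (0:ℝ) ≤ n₂ := Nat.cast_nonneg n₂
    have hr₁R : (0:ℝ) ≤ r₁ := Nat.cast_nonneg r₁
    have hr₂R : (0:ℝ) ≤ r₂ := Nat.cast_nonneg r₂
    have hn₁R1 : (1:ℝ) ≤ n₁ := by exact_mod_cast hn₁
    have hn₂R1 : (1:ℝ) ≤ n₂ := by exact_mod_cast hn₂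
    have hz2 : z - 2 ≠ 0 := by
      have : (0:ℝ) < z - 2 := by nlinarith
      exact this.ne'
    have h1 : ∀ i : Fin n₁, (z - 2) * (z - r₁ - n₂) - nu₁ i ≠ 0 := by
      intro i
      have hb := hnu₁le i
      have f1 : (0:ℝ) ≤ (z - 3) * (z - r₁ - n₂ - 2 * r₁ - 1) :=
        mul_nonneg (by nlinarith) (by nlinarith)
      have f2 : (0:ℝ) ≤ (z - 4) * r₁ := mul_nonneg (by nlinarith) hr₁R
      have : (0:ℝ) < (z - 2) * (z - r₁ - n₂) - nu₁ i := by nlinarith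
      exact this.ne'
    have h2 : ∀ i : Fin n₂, z - n₁ - nu₂ i ≠ 0 := by
      intro i
      have hb := hnu₂le i
      have : (0:ℝ) < z - n₁ - nu₂ i := by nlinarith
      exact this.ne'
    have hmg := main_generic hn₁ hn₂ G₁ G₂ hreg₁ hreg₂ nu₁ hnu₁top hchar₁ nu₂ hnu₂top hchar₂
      z hz2 h1 h2
    simp only [Set.mem_setOf_eq, hp_def, hq_def, Polynomial.eval_mul, Polynomial.eval_pow,
      Polynomial.eval_sub, Polynomial.eval_add, Polynomial.eval_X, Polynomial.eval_C,
      Polynomial.eval_prod]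
    rw [eval_charpoly', hmg, hm₁']
    have e2 : ∏ i ∈ Finset.univ.erase ⟨n₂ - 1, by omega⟩, (z - n₁ - nu₂ i)
        = ∏ i ∈ Finset.univ.erase ⟨n₂ - 1, by omega⟩, (z - ((n₁ : ℝ) + nu₂ i)) :=
      Finset.prod_congr rfl fun i _ => by ring
    have e1 : ∏ i ∈ Finset.univ.erase ⟨n₁ - 1, by omega⟩, ((z - 2) * (z - r₁ - n₂) - nu₁ i)
        = ∏ i ∈ Finset.univ.erase ⟨n₁ - 1, by omega⟩,
            (z ^ 2 - ((2 : ℝ) + r₁ + n₂) * z + (2 * ((r₁ : ℝ) + n₂) - nu₁ i)) :=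
      Finset.prod_congr rfl fun i _ => by ring
    rw [e2, e1]
    ring
  have hpq : p = q := Polynomial.eq_of_infinite_eval_eq p q hinf
  have hx2' : x - 2 ≠ 0 := sub_ne_zero.2 hx2
  have heval := congrArg (Polynomial.eval x) hpq
  simp only [hp_def, hq_def, Polynomial.eval_mul, Polynomial.eval_pow, Polynomial.eval_sub,
    Polynomial.eval_add, Polynomial.eval_X, Polynomial.eval_C, Polynomial.eval_prod] at heval
  rw [eval_charpoly'] at heval
  have e2' : ∏ i ∈ Finset.univ.erase ⟨n₂ - 1, by omega⟩, (x - (n₁ : ℝ) - nu₂ i)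
      = ∏ i ∈ Finset.univ.erase ⟨n₂ - 1, by omega⟩, (x - ((n₁ : ℝ) + nu₂ i)) :=
    Finset.prod_congr rfl fun i _ => by ring
  have e1' : ∏ i ∈ Finset.univ.erase ⟨n₁ - 1, by omega⟩,
        (x ^ 2 - (2 + (r₁ : ℝ) + n₂) * x + 2 * ((r₁ : ℝ) + n₂) - nu₁ i)
      = ∏ i ∈ Finset.univ.erase ⟨n₁ - 1, by omega⟩,
        (x ^ 2 - ((2 : ℝ) + r₁ + n₂) * x + (2 * ((r₁ : ℝ) + n₂) - nu₁ i)) :=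
    Finset.prod_congr rfl fun i _ => by ring
  rw [e2', e1', zpow_sub₀ hx2', zpow_natCast, zpow_natCast]
  have hpow : (x - 2) ^ n₁ ≠ 0 := pow_ne_zero _ hx2'
  rw [div_mul_eq_mul_div, div_mul_eq_mul_div, div_mul_eq_mul_div, eq_div_iff hpow]
  linear_combination heval
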